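/- Let X be a finite set, let P ≥ 1 be a natural number, and let M_1, …, M_P be matroids with ground set X. Let 𝓕 be the family of subsets of X that are independent in every M_p, and let f be a nondecreasing submodular function on subsets of X. Suppose S ∈ 𝓕 admits an enumeration s_1, …, s_K of its elements (with prefixes S_0 = ∅ and S_k = {s_1, …, s_k}) satisfying the greedy property: for every k ∈ {1, …, K} and every j ∈ X \ S_{k-1} with S_{k-1} ∪ {j} ∈ 𝓕, one has f(S_{k-1} ∪ {j}) − f(S_{k-1}) ≤ f(S_k) − f(S_{k-1}); and suppose S is maximal in 𝓕, i.e., S ∪ {j} ∉ 𝓕 for every j ∈ X \ S. Then for every T ∈ 𝓕, f(T) − f(S) ≤ P · (f(S) − f(∅)); equivalently, writing Φ for the maximum of f over 𝓕 and Φ^G = f(S), one has (Φ − Φ^G) ≤ (P/(P+1)) · (Φ − f(∅)). -/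

import Mathlib

lemma indep_encard_le_of_subset_closure {α : Type*} {M : Matroid α} {I J : Set α}
    (hI : M.Indep I) (hJ : M.Indep J) (hIJ : I ⊆ M.closure J) : I.encard ≤ J.encard := by
  obtain ⟨I', hI'b, hII'⟩ := hI.subset_isBasis_of_subset hIJ (M.closure_subset_ground J)
  calc I.encard ≤ I'.encard := Set.encard_mono hII'
    _ = J.encard := hI'b.encard_eq_encard hJ.isBasis_closure

lemma greedy_abel_aux (P : ℕ) (ρ : ℕ → ℝ) (n : ℕ → ℕ) :
    ∀ K : ℕ, (∀ k, 1 ≤ k → k ≤ K → 0 ≤ ρ k) →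
    (∀ k, 1 ≤ k → k + 1 ≤ K → ρ (k + 1) ≤ ρ k) →
    (∀ k, k ≤ K → ((∑ i ∈ Finset.Icc 1 k, n i : ℕ) : ℝ) ≤ P * k) →
    ∑ k ∈ Finset.Icc 1 K, (n k : ℝ) * ρ k
      + ((P * K : ℝ) - (∑ i ∈ Finset.Icc 1 K, n i : ℕ)) * ρ K
      ≤ P * ∑ k ∈ Finset.Icc 1 K, ρ k := by
  intro K
  induction K with
  | zero => simp
  | succ K ih =>
    intro h0 hdec hN
    have ihh := ih (fun k h1 h2 => h0 k h1 (by omega)) (fun k h1 h2 => hdec k h1 (by omega))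
      (fun k hk => hN k (by omega))
    rw [Finset.sum_Icc_succ_top (by omega), Finset.sum_Icc_succ_top (by omega),
      Finset.sum_Icc_succ_top (by omega)]
    have hPK : (0:ℝ) ≤ (P*K:ℝ) - (∑ i ∈ Finset.Icc 1 K, n i : ℕ) := by
      have := hN K (by omega); linarith
    have hmul : ((P*K:ℝ) - (∑ i ∈ Finset.Icc 1 K, n i : ℕ)) * ρ (K+1)
        ≤ ((P*K:ℝ) - (∑ i ∈ Finset.Icc 1 K, n i : ℕ)) * ρ K := by
      rcases Nat.eq_zero_or_pos K with hK0 | hK1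
      · subst hK0; simp
      · exact mul_le_mul_of_nonneg_left (hdec K hK1 le_rfl) hPK
    push_cast
    push_cast at ihh hmul hPK
    nlinarith [hmul, ihh, hPK]

lemma greedy_abel (P : ℕ) (ρ : ℕ → ℝ) (n : ℕ → ℕ) (K : ℕ)
    (h0 : ∀ k, 1 ≤ k → k ≤ K → 0 ≤ ρ k)
    (hdec : ∀ k, 1 ≤ k → k + 1 ≤ K → ρ (k + 1) ≤ ρ k)
    (hN : ∀ k, k ≤ K → ((∑ i ∈ Finset.Icc 1 k, n i : ℕ) : ℝ) ≤ P * k) :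
    ∑ k ∈ Finset.Icc 1 K, (n k : ℝ) * ρ k ≤ P * ∑ k ∈ Finset.Icc 1 K, ρ k := by
  have haux := greedy_abel_aux P ρ n K h0 hdec hN
  rcases Nat.eq_zero_or_pos K with hK0 | hK1
  · subst hK0; simp
  · have hPK : (0:ℝ) ≤ (P*K:ℝ) - (∑ i ∈ Finset.Icc 1 K, n i : ℕ) := by
      have := hN K le_rfl; linarith
    have := mul_nonneg hPK (h0 K hK1 le_rfl)
    linarith

/-- Greedy approximation bound for maximizing a nondecreasing submodular
function over the intersection of `P` matroids: if `S = Sk K` is a maximal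
member of the family `F` of common independent sets produced greedily, then
for every `T ∈ F`, `f T - f S ≤ P * (f S - f ∅)`. -/
theorem greedy_matroid_intersection_bound
    {α : Type*} [Fintype α] [DecidableEq α]
    (P : ℕ) (hP : 1 ≤ P)
    (M : Fin P → Matroid α) (hME : ∀ p, (M p).E = Set.univ)
    (f : Finset α → ℝ)
    (hmono : ∀ A B : Finset α, A ⊆ B → f A ≤ f B)
    (hsub : ∀ A B : Finset α, A ⊆ B → ∀ x ∉ B,
      f (insert x B) - f B ≤ f (insert x A) - f A)
    (F : Finset α → Prop)
    (hF : ∀ A : Finset α, F A ↔ ∀ p, (M p).Indep (↑A : Set α))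
    (K : ℕ) (s : ℕ → α) (hinj : Set.InjOn s (Set.Iio K))
    (Sk : ℕ → Finset α) (hSk : ∀ k, Sk k = (Finset.range k).image s)
    (hSF : F (Sk K))
    (hgreedy : ∀ k, 1 ≤ k → k ≤ K → ∀ j ∉ Sk (k - 1),
      F (insert j (Sk (k - 1))) →
      f (insert j (Sk (k - 1))) - f (Sk (k - 1)) ≤ f (Sk k) - f (Sk (k - 1)))
    (hmax : ∀ j ∉ Sk K, ¬ F (insert j (Sk K)))
    (T : Finset α) (hT : F T) :
    f T - f (Sk K) ≤ P * (f (Sk K) - f ∅) := by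
  classical
  -- downward closedness of F
  have hdc : ∀ A B : Finset α, A ⊆ B → F B → F A := by
    intro A B hAB hB
    rw [hF] at hB ⊢
    exact fun p => ((hB p).subset (Finset.coe_subset.2 hAB))
  -- monotonicity of Sk
  have hmonoSk : ∀ {a b : ℕ}, a ≤ b → Sk a ⊆ Sk b := by
    intro a b hab
    rw [hSk, hSk]
    exact Finset.image_subset_image (Finset.range_subset_range.2 hab)
  -- cardinality of Sk
  have hScard : ∀ k, k ≤ K → (Sk k).card = k := by
    intro k hk
    rw [hSk, Finset.card_image_of_injOn, Finset.card_range]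
    intro i hi j hj hij
    exact hinj (lt_of_lt_of_le (Finset.mem_range.1 (Finset.mem_coe.1 hi)) hk)
      (lt_of_lt_of_le (Finset.mem_range.1 (Finset.mem_coe.1 hj)) hk) hij
  have hSk0 : Sk 0 = ∅ := by rw [hSk]; simp
  have hSkins : ∀ k, Sk (k + 1) = insert (s k) (Sk k) := by
    intro k
    rw [hSk, hSk, Finset.range_add_one, Finset.image_insert]
  have hsnot : ∀ k, k < K → s k ∉ Sk k := by
    intro k hk hmem
    rw [hSk, Finset.mem_image] at hmem
    obtain ⟨i, hi, his⟩ := hmem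
    have hik := Finset.mem_range.1 hi
    have := hinj (lt_trans hik hk) hk his
    omega
  -- the increments ρ
  set ρ : ℕ → ℝ := fun k => f (Sk k) - f (Sk (k - 1)) with hρ
  have hρ0 : ∀ k, 1 ≤ k → k ≤ K → 0 ≤ ρ k := by
    intro k h1 h2
    have : f (Sk (k-1)) ≤ f (Sk k) := hmono _ _ (hmonoSk (by omega))
    simp only [hρ]; linarith
  have hρdec : ∀ k, 1 ≤ k → k + 1 ≤ K → ρ (k + 1) ≤ ρ k := by
    intro k h1 h2
    have h1' : Sk (k - 1) ⊆ Sk k := hmonoSk (by omega)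
    have hsk : s k ∉ Sk k := hsnot k (by omega)
    have hstep1 : f (insert (s k) (Sk k)) - f (Sk k)
        ≤ f (insert (s k) (Sk (k-1))) - f (Sk (k-1)) := hsub _ _ h1' _ hsk
    have hmemF : F (insert (s k) (Sk (k - 1))) := by
      apply hdc _ (Sk K) _ hSF
      intro x hx
      rcases Finset.mem_insert.1 hx with h | h
      · subst h
        have : s k ∈ Sk (k+1) := by rw [hSkins]; exact Finset.mem_insert_self _ _
        exact hmonoSk h2 this
      · exact hmonoSk (by omega) h
    have hstep2 := hgreedy k h1 (by omega) (s k)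
      (fun hmem => hsk (h1' hmem)) hmemF
    have hins : Sk (k + 1) = insert (s k) (Sk k) := hSkins k
    simp only [hρ, Nat.add_sub_cancel]
    rw [hins]
    linarith
  -- telescoping sum of ρ
  have hρsum : ∑ k ∈ Finset.Icc 1 K, ρ k = f (Sk K) - f ∅ := by
    have hgen : ∀ m : ℕ, ∑ k ∈ Finset.Icc 1 m, ρ k = f (Sk m) - f (Sk 0) := by
      intro m
      induction m with
      | zero => simp
      | succ m ih =>
        rw [Finset.sum_Icc_succ_top (by omega), ih]
        simp only [hρ, Nat.add_sub_cancel]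
        ring
    rw [hgen K, hSk0]
  -- definition of κ
  have hex : ∀ j, j ∉ Sk K → ∃ k, ¬ F (insert j (Sk k)) := fun j hj => ⟨K, hmax j hj⟩
  set κ : α → ℕ := fun j => if h : ∃ k, ¬ F (insert j (Sk k)) then Nat.find h else 0 with hκ
  have hκspec : ∀ j, j ∉ Sk K → ¬ F (insert j (Sk (κ j))) := by
    intro j hj
    simp only [hκ, dif_pos (hex j hj)]
    exact Nat.find_spec (hex j hj)
  have hκle : ∀ j, j ∉ Sk K → κ j ≤ K := by
    intro j hj
    simp only [hκ, dif_pos (hex j hj)]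
    exact Nat.find_le (hmax j hj)
  have hκpos : ∀ j, j ∈ T → j ∉ Sk K → 1 ≤ κ j := by
    intro j hjT hj
    by_contra h
    have h0 : κ j = 0 := by omega
    apply hκspec j hj
    rw [h0, hSk0]
    exact hdc _ T (by simpa using hjT) hT
  have hκmin : ∀ j, j ∈ T → j ∉ Sk K → F (insert j (Sk (κ j - 1))) := by
    intro j hjT hj
    have h1 := hκpos j hjT hj
    by_contra hcon
    have heq : κ j = Nat.find (hex j hj) := by
      simp only [hκ]; rw [dif_pos (hex j hj)]
    rw [heq] at hcon h1
    exact hcon (not_not.1 (Nat.find_min (hex j hj) (by omega)))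
  -- per-element bound
  have hperel : ∀ j, j ∈ T → j ∉ Sk K →
      f (insert j (Sk K)) - f (Sk K) ≤ ρ (κ j) := by
    intro j hjT hj
    have h1 := hκpos j hjT hj
    have h2 := hκle j hj
    have hsubSk : Sk (κ j - 1) ⊆ Sk K := hmonoSk (by omega)
    have hjnot : j ∉ Sk (κ j - 1) := fun h => hj (hsubSk h)
    calc f (insert j (Sk K)) - f (Sk K)
        ≤ f (insert j (Sk (κ j - 1))) - f (Sk (κ j - 1)) := hsub _ _ hsubSk _ hj
      _ ≤ f (Sk (κ j)) - f (Sk (κ j - 1)) :=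
          hgreedy (κ j) h1 h2 j hjnot (hκmin j hjT hj)
      _ = ρ (κ j) := rfl
  -- telescoping submodularity bound
  have htel : ∀ D : Finset α,
      f (Sk K ∪ D) - f (Sk K) ≤ ∑ j ∈ D, (f (insert j (Sk K)) - f (Sk K)) := by
    intro D
    induction D using Finset.induction_on with
    | empty => simp
    | insert a D' ha ih =>
      rw [Finset.sum_insert ha]
      rw [Finset.union_insert]
      by_cases hmem : a ∈ Sk K ∪ D'
      · rw [Finset.insert_eq_self.2 hmem]
        have : 0 ≤ f (insert a (Sk K)) - f (Sk K) :=
          sub_nonneg.2 (hmono _ _ (Finset.subset_insert _ _))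
        linarith
      · have := hsub (Sk K) (Sk K ∪ D') Finset.subset_union_left a hmem
        linarith
  -- main chain
  have hTsub : f T - f (Sk K) ≤ ∑ j ∈ T \ Sk K, (f (insert j (Sk K)) - f (Sk K)) := by
    have h1 : f T ≤ f (Sk K ∪ (T \ Sk K)) := by
      apply hmono
      intro x hx
      by_cases h : x ∈ Sk K
      · exact Finset.mem_union_left _ h
      · exact Finset.mem_union_right _ (Finset.mem_sdiff.2 ⟨hx, h⟩)
    have h2 := htel (T \ Sk K)
    linarith
  have hsum1 : ∑ j ∈ T \ Sk K, (f (insert j (Sk K)) - f (Sk K))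
      ≤ ∑ j ∈ T \ Sk K, ρ (κ j) := by
    apply Finset.sum_le_sum
    intro j hj
    rw [Finset.mem_sdiff] at hj
    exact hperel j hj.1 hj.2
  -- fiberwise decomposition
  set n : ℕ → ℕ := fun k => ((T \ Sk K).filter (fun j => κ j = k)).card with hn
  have hmaps : ∀ j ∈ T \ Sk K, κ j ∈ Finset.Icc 1 K := by
    intro j hj
    rw [Finset.mem_sdiff] at hj
    exact Finset.mem_Icc.2 ⟨hκpos j hj.1 hj.2, hκle j hj.2⟩
  have hsum2 : ∑ j ∈ T \ Sk K, ρ (κ j) = ∑ k ∈ Finset.Icc 1 K, (n k : ℝ) * ρ k := by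
    rw [← Finset.sum_fiberwise_of_maps_to hmaps (fun j => ρ (κ j))]
    apply Finset.sum_congr rfl
    intro k _
    rw [← nsmul_eq_mul, ← Finset.sum_const]
    apply Finset.sum_congr rfl
    intro j hj
    rw [Finset.mem_filter] at hj
    rw [hj.2]
  -- counting bound
  have hcount : ∀ k, k ≤ K → ((T \ Sk K).filter (fun j => κ j ≤ k)).card ≤ P * k := by
    intro k hkK
    set B : Fin P → Finset α :=
      fun p => T.filter (fun j => j ∈ (M p).closure (↑(Sk k) : Set α)) with hB
    have hsubB : (T \ Sk K).filter (fun j => κ j ≤ k)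
        ⊆ (Finset.univ : Finset (Fin P)).biUnion B := by
      intro j hj
      rw [Finset.mem_filter, Finset.mem_sdiff] at hj
      obtain ⟨⟨hjT, hjS⟩, hjk⟩ := hj
      have hnF : ¬ F (insert j (Sk k)) := by
        intro hFk
        exact hκspec j hjS (hdc _ _ (Finset.insert_subset_insert _ (hmonoSk hjk)) hFk)
      rw [hF] at hnF
      push_neg at hnF
      obtain ⟨p, hp⟩ := hnF
      have hSkind : (M p).Indep (↑(Sk k) : Set α) := by
        rw [hF] at hSF
        exact (hSF p).subset (Finset.coe_subset.2 (hmonoSk hkK))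
      have hjnot : j ∉ (↑(Sk k) : Set α) := by
        simp only [Finset.mem_coe]
        exact fun h => hjS (hmonoSk hkK h)
      have hcl : j ∈ (M p).closure (↑(Sk k) : Set α) := by
        by_contra hcl
        apply hp
        rw [Finset.coe_insert]
        rw [hSkind.insert_indep_iff_of_notMem hjnot]
        rw [hME p]
        exact ⟨Set.mem_univ j, hcl⟩
      apply Finset.mem_biUnion.2 ⟨p, Finset.mem_univ p, ?_⟩
      rw [hB]
      exact Finset.mem_filter.2 ⟨hjT, hcl⟩
    calc ((T \ Sk K).filter (fun j => κ j ≤ k)).card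
        ≤ ((Finset.univ : Finset (Fin P)).biUnion B).card := Finset.card_le_card hsubB
      _ ≤ ∑ p : Fin P, (B p).card := Finset.card_biUnion_le
      _ ≤ ∑ p : Fin P, k := by
          apply Finset.sum_le_sum
          intro p _
          have hBind : (M p).Indep (↑(B p) : Set α) := by
            rw [hF] at hT
            exact (hT p).subset (Finset.coe_subset.2 (Finset.filter_subset _ _))
          have hSkind : (M p).Indep (↑(Sk k) : Set α) := by
            rw [hF] at hSF
            exact (hSF p).subset (Finset.coe_subset.2 (hmonoSk hkK))
          have hsubcl : (↑(B p) : Set α) ⊆ (M p).closure (↑(Sk k) : Set α) := by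
            intro x hx
            rw [Finset.mem_coe, hB, Finset.mem_filter] at hx
            exact hx.2
          have := indep_encard_le_of_subset_closure hBind hSkind hsubcl
          rw [Set.encard_coe_eq_coe_finsetCard, Set.encard_coe_eq_coe_finsetCard] at this
          have hcard : (B p).card ≤ (Sk k).card := by exact_mod_cast this
          rw [hScard k hkK] at hcard
          exact hcard
      _ = P * k := by simp [Finset.sum_const, mul_comm]
  -- partial sums of n
  have hNsum : ∀ k, k ≤ K → ((∑ i ∈ Finset.Icc 1 k, n i : ℕ) : ℝ) ≤ P * k := by
    intro k hkK
    have hmaps' : ∀ j ∈ (T \ Sk K).filter (fun j => κ j ≤ k), κ j ∈ Finset.Icc 1 k := by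
      intro j hj
      rw [Finset.mem_filter, Finset.mem_sdiff] at hj
      exact Finset.mem_Icc.2 ⟨hκpos j hj.1.1 hj.1.2, hj.2⟩
    have heq : ∑ i ∈ Finset.Icc 1 k, n i
        = ((T \ Sk K).filter (fun j => κ j ≤ k)).card := by
      rw [Finset.card_eq_sum_card_fiberwise hmaps']
      apply Finset.sum_congr rfl
      intro i hi
      have hik := (Finset.mem_Icc.1 hi).2
      simp only [hn]
      rw [Finset.filter_filter]
      congr 1
      ext j
      simp only [Finset.mem_filter]
      constructor
      · rintro ⟨hjm, hji⟩
        exact ⟨hjm, le_trans (le_of_eq hji) hik, hji⟩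
      · rintro ⟨hjm, _, hji⟩
        exact ⟨hjm, hji⟩
    rw [heq]
    exact_mod_cast hcount k hkK
  -- conclude
  have habel := greedy_abel P ρ n K hρ0 hρdec hNsum
  rw [hρsum] at habel
  calc f T - f (Sk K) ≤ ∑ j ∈ T \ Sk K, ρ (κ j) := le_trans hTsub hsum1
    _ = ∑ k ∈ Finset.Icc 1 K, (n k : ℝ) * ρ k := hsum2
    _ ≤ P * (f (Sk K) - f ∅) := habel
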